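/- Let α be an equivalence relation on X ⊕ Y and β an equivalence relation on Y ⊕ Z (X, Y, Z finite sets), regarded as PBRs Ψ(α) on (X,Y) and Ψ(β) on (Y,Z). Let Y' ⊆ Y be the set of y ∈ Y for which there is no finite sequence y = a₁, a₂, …, a_p of elements of X ⊕ Y ⊕ Z with a_p ∈ X ⊕ Z such that every two consecutive elements are related by α or by β. For y₁, y₂ ∈ Y' set y₁ ∼ y₂ if and only if there is a finite sequence y₁ = a₁, …, a_p = y₂ with all a_i ∈ Y such that every two consecutive elements are related by α or by β; then ∼ is an equivalence relation on Y', and 𝔭(α,β) denotes the number of its equivalence classes. Then 𝔭(α,β) = 𝔣((Ψ(α),Ψ(β))). Consequently, the map (α,k) ↦ (Ψ(α),k) from the deformed partition category to the deformed category of PBRs respects the deformed compositions. -/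

import Mathlib

namespace PBRPaper

/-- A partitioned binary relation (PBR) on `(X, Y)`: a binary relation on
the disjoint union `X ⊕ Y`. -/
abbrev PBR (X Y : Type) : Type := Set ((X ⊕ Y) × (X ⊕ Y))

variable {X Y Z : Type}

/-- The inclusion of `X ⊕ Y` into `X ⊕ Y ⊕ Z`. -/
def ι₁ : X ⊕ Y → X ⊕ Y ⊕ Z := Sum.elim Sum.inl fun y => Sum.inr (Sum.inl y)

/-- The inclusion of `Y ⊕ Z` into `X ⊕ Y ⊕ Z`. -/
def ι₂ : Y ⊕ Z → X ⊕ Y ⊕ Z :=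
  Sum.elim (fun y => Sum.inr (Sum.inl y)) fun z => Sum.inr (Sum.inr z)

/-- The inclusion of `X ⊕ Z` into `X ⊕ Y ⊕ Z`. -/
def ι₀ : X ⊕ Z → X ⊕ Y ⊕ Z := Sum.elim Sum.inl fun z => Sum.inr (Sum.inr z)

/-- Labeled edges in the ambient `X ⊕ Y ⊕ Z`: label `false` means
"an edge of `α`", label `true` means "an edge of `β`". -/
def EdgeMem (α : PBR X Y) (β : PBR Y Z)
    (e : Bool × (X ⊕ Y ⊕ Z) × (X ⊕ Y ⊕ Z)) : Prop :=
  if e.1 then ∃ p ∈ β, ι₂ p.1 = e.2.1 ∧ ι₂ p.2 = e.2.2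
  else ∃ p ∈ α, ι₁ p.1 = e.2.1 ∧ ι₁ p.2 = e.2.2

/-- An `(α,β)`-connected sequence: a nonempty list of labeled edges of `α`/`β`,
no two successive edges from the same PBR, endpoints matching up. -/
def IsConnSeq (α : PBR X Y) (β : PBR Y Z)
    (L : List (Bool × (X ⊕ Y ⊕ Z) × (X ⊕ Y ⊕ Z))) : Prop :=
  L ≠ [] ∧ (∀ e ∈ L, EdgeMem α β e) ∧
    L.Chain' fun e f => e.1 ≠ f.1 ∧ e.2.2 = f.2.1

/-- `L` is an `(α,β)`-connected sequence connecting `a` to `b`. -/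
def ConnectsVia (α : PBR X Y) (β : PBR Y Z)
    (L : List (Bool × (X ⊕ Y ⊕ Z) × (X ⊕ Y ⊕ Z))) (a b : X ⊕ Z) : Prop :=
  IsConnSeq α β L ∧ L.head?.map (fun e => e.2.1) = some (ι₀ a) ∧
    L.getLast?.map (fun e => e.2.2) = some (ι₀ b)

/-- Composition of partitioned binary relations. -/
def comp (β : PBR Y Z) (α : PBR X Y) : PBR X Z :=
  {p | ∃ L, ConnectsVia α β L p.1 p.2}

/-- The identity PBR `ε_X`, consisting of all edges `(x^(d), x^(c))`
and `(x^(c), x^(d))`. -/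
def eps (X : Type) : PBR X X :=
  {p | ∃ x : X, p = (Sum.inl x, Sum.inr x) ∨ p = (Sum.inr x, Sum.inl x)}

/-- A labeled edge is `(α,β)`-frothy if it is an edge of the corresponding PBR
occurring in no `(α,β)`-connected sequence connecting two elements of `X ⊕ Z`. -/
def IsFrothy (α : PBR X Y) (β : PBR Y Z)
    (e : Bool × (X ⊕ Y ⊕ Z) × (X ⊕ Y ⊕ Z)) : Prop :=
  EdgeMem α β e ∧ ∀ L a b, ConnectsVia α β L a b → e ∉ L

/-- An `(α,β)`-frothy cycle. -/
def IsFrothyCycle (α : PBR X Y) (β : PBR Y Z)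
    (L : List (Bool × (X ⊕ Y ⊕ Z) × (X ⊕ Y ⊕ Z))) : Prop :=
  IsConnSeq α β L ∧ 2 ≤ L.length ∧
    L.getLast?.map (fun e => e.2.2) = L.head?.map (fun e => e.2.1) ∧
    L.head?.map (fun e => e.1) ≠ L.getLast?.map (fun e => e.1) ∧
    ∀ e ∈ L, IsFrothy α β e

/-- The type of `(α,β)`-frothy cycles. -/
def FrothyCycles (α : PBR X Y) (β : PBR Y Z) :=
  {L : List (Bool × (X ⊕ Y ⊕ Z) × (X ⊕ Y ⊕ Z)) // IsFrothyCycle α β L}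

/-- `𝔣((α,β))`: the number of equivalence classes of `(α,β)`-frothy cycles,
where the equivalence is generated by elementary equivalence (sharing a common
edge of the same PBR); note that naive equivalence (cyclic permutation) is
subsumed, since a cycle and any of its cyclic permutations share all edges. -/
noncomputable def fPBR (α : PBR X Y) (β : PBR Y Z) : ℕ :=
  Nat.card (Quot fun L L' : FrothyCycles α β => ∃ e, e ∈ L.1 ∧ e ∈ L'.1)

variable {X Y Z : Type} in
/-- Two elements of `X ⊕ Y ⊕ Z` are related by `α` or by `β`
(each regarded inside `X ⊕ Y ⊕ Z`). -/
def step (α : PBR X Y) (β : PBR Y Z) (u v : X ⊕ Y ⊕ Z) : Prop :=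
  (∃ p ∈ α, ι₁ p.1 = u ∧ ι₁ p.2 = v) ∨ (∃ p ∈ β, ι₂ p.1 = u ∧ ι₂ p.2 = v)

variable {X Y Z : Type} in
/-- The set `Y'` of elements `y ∈ Y` admitting no finite sequence
`y = a₁, …, a_p` in `X ⊕ Y ⊕ Z` with `a_p ∈ X ⊕ Z` whose consecutive members
are related by `α` or by `β`. -/
def Yprime (α : PBR X Y) (β : PBR Y Z) : Set Y :=
  {y | ¬ ∃ (k : ℕ) (c : Fin (k + 1) → X ⊕ Y ⊕ Z),
        c 0 = Sum.inr (Sum.inl y) ∧ (∃ w : X ⊕ Z, c (Fin.last k) = ι₀ w) ∧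
        ∀ i : Fin k, step α β (c i.castSucc) (c i.succ)}

variable {X Y Z : Type} in
/-- `y₁ ∼ y₂`: there is a finite sequence `y₁ = a₁, …, a_p = y₂` with all
members in `Y` whose consecutive members are related by `α` or by `β`. -/
def simRel (α : PBR X Y) (β : PBR Y Z) (y₁ y₂ : Y) : Prop :=
  ∃ (k : ℕ) (c : Fin (k + 1) → Y), c 0 = y₁ ∧ c (Fin.last k) = y₂ ∧
    ∀ i : Fin k, (Sum.inr (c i.castSucc), Sum.inr (c i.succ)) ∈ α ∨
      (Sum.inl (c i.castSucc), Sum.inl (c i.succ)) ∈ β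

variable {X Y Z : Type} in
/-- `𝔭(α,β)`: the number of equivalence classes of `∼` on `Y'`. -/
noncomputable def pPart (α : PBR X Y) (β : PBR Y Z) : ℕ :=
  Nat.card (Quot fun y₁ y₂ : {y : Y // y ∈ Yprime α β} => simRel α β y₁.1 y₂.1)

variable {X Y Z : Type} in
/-- The composition in the partition category, regarded via equivalence
relations: `(a,b)` lie in `β∘α` iff they are joined by a finite sequence in
`X ⊕ Y ⊕ Z` whose consecutive members are related by `α` or by `β`. -/
def partComp (β : PBR Y Z) (α : PBR X Y) : Set ((X ⊕ Z) × (X ⊕ Z)) :=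
  {p | ∃ (k : ℕ) (c : Fin (k + 1) → X ⊕ Y ⊕ Z),
        c 0 = ι₀ p.1 ∧ c (Fin.last k) = ι₀ p.2 ∧
        ∀ i : Fin k, step α β (c i.castSucc) (c i.succ)}


section Aux

lemma finChain_iff_rtg {V : Type*} (r : V → V → Prop) (u v : V) :
    (∃ (k : ℕ) (c : Fin (k + 1) → V), c 0 = u ∧ c (Fin.last k) = v ∧
      ∀ i : Fin k, r (c i.castSucc) (c i.succ)) ↔ Relation.ReflTransGen r u v := by
  constructor
  · rintro ⟨k, c, h0, hl, hstep⟩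
    induction k generalizing u with
    | zero => rw [← h0, ← hl]; rfl
    | succ k ih =>
      have h1 : Relation.ReflTransGen r (c 1) v := by
        refine ih (c 1) (fun i => c i.succ) rfl ?_ ?_
        · simpa [Fin.succ_last] using hl
        · intro i
          have := hstep i.succ
          exact this
      refine Relation.ReflTransGen.head ?_ h1
      have := hstep 0
      simpa [h0] using this
  · intro h
    induction h with
    | refl => exact ⟨0, fun _ => u, rfl, rfl, fun i => i.elim0⟩
    | @tail b c hab hbc ih =>
      obtain ⟨k, d, h0, hl, hstep⟩ := ih
      refine ⟨k + 1, Fin.snoc d c, ?_, by simp, ?_⟩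
      · rw [show (0 : Fin (k+2)) = Fin.castSucc 0 from rfl, Fin.snoc_castSucc]; exact h0
      · intro i
        refine Fin.lastCases ?_ (fun j => ?_) i
        · simpa [Fin.snoc_castSucc, hl] using hbc
        · have := hstep j
          rw [Fin.succ_castSucc, Fin.snoc_castSucc, Fin.snoc_castSucc]; exact this

variable {X Y Z : Type}

/-- The vertex of `X ⊕ Y ⊕ Z` corresponding to `y : Y`. -/
abbrev yv (y : Y) : X ⊕ Y ⊕ Z := Sum.inr (Sum.inl y)

/-- `u` reaches some element of `X ⊕ Z` by a `step`-path. -/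
def ReachR (α : PBR X Y) (β : PBR Y Z) (u : X ⊕ Y ⊕ Z) : Prop :=
  ∃ w : X ⊕ Z, Relation.ReflTransGen (step α β) u (ι₀ w)

/-- One step inside `Y`. -/
def stepY (α : PBR X Y) (β : PBR Y Z) (y y' : Y) : Prop :=
  (Sum.inr y, Sum.inr y') ∈ α ∨ (Sum.inl y, Sum.inl y') ∈ β

lemma iota1_inj : Function.Injective (ι₁ : X ⊕ Y → X ⊕ Y ⊕ Z) := by
  intro a b h; cases a <;> cases b <;> simp_all [ι₁]

lemma iota2_inj : Function.Injective (ι₂ : Y ⊕ Z → X ⊕ Y ⊕ Z) := by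
  intro a b h; cases a <;> cases b <;> simp_all [ι₂]

lemma iota0_inj : Function.Injective (ι₀ : X ⊕ Z → X ⊕ Y ⊕ Z) := by
  intro a b h; cases a <;> cases b <;> simp_all [ι₀]

lemma vertex_cases (u : X ⊕ Y ⊕ Z) : (∃ w : X ⊕ Z, u = ι₀ w) ∨ ∃ y : Y, u = yv y := by
  rcases u with x | y | z
  · exact Or.inl ⟨Sum.inl x, rfl⟩
  · exact Or.inr ⟨y, rfl⟩
  · exact Or.inl ⟨Sum.inr z, rfl⟩

lemma yv_ne_iota0 (y : Y) (w : X ⊕ Z) : (yv y : X ⊕ Y ⊕ Z) ≠ ι₀ w := by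
  cases w <;> simp [ι₀]

variable {α : PBR X Y} {β : PBR Y Z}

lemma mem_Yprime_iff {y : Y} : y ∈ Yprime α β ↔ ¬ ReachR α β (yv y) := by
  unfold Yprime ReachR
  simp only [Set.mem_setOf_eq, ← finChain_iff_rtg]
  constructor
  · rintro h ⟨w, k, c, h0, hl, hs⟩; exact h ⟨k, c, h0, ⟨w, hl⟩, hs⟩
  · rintro h ⟨k, c, h0, ⟨w, hl⟩, hs⟩; exact h ⟨w, k, c, h0, hl, hs⟩

section Equiv
variable (hα : Equivalence fun a b : X ⊕ Y => (a, b) ∈ α)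
    (hβ : Equivalence fun a b : Y ⊕ Z => (a, b) ∈ β)
include hα hβ

lemma step_symm {u v : X ⊕ Y ⊕ Z} (h : step α β u v) : step α β v u := by
  rcases h with ⟨p, hp, h1, h2⟩ | ⟨p, hp, h1, h2⟩
  · exact Or.inl ⟨(p.2, p.1), hα.symm hp, h2, h1⟩
  · exact Or.inr ⟨(p.2, p.1), hβ.symm hp, h2, h1⟩

lemma stepY_symm {y y' : Y} (h : stepY α β y y') : stepY α β y' y := by
  rcases h with h | h
  · exact Or.inl (hα.symm h)
  · exact Or.inr (hβ.symm h)

end Equiv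

lemma reach_iota0 (α : PBR X Y) (β : PBR Y Z) (w : X ⊕ Z) : ReachR α β (ι₀ w) :=
  ⟨w, Relation.ReflTransGen.refl⟩

lemma reach_head {u v : X ⊕ Y ⊕ Z} (h : step α β u v) (hv : ReachR α β v) : ReachR α β u := by
  obtain ⟨w, hw⟩ := hv; exact ⟨w, Relation.ReflTransGen.head h hw⟩

lemma not_reach_cases {u : X ⊕ Y ⊕ Z} (h : ¬ ReachR α β u) :
    ∃ y : Y, u = yv y ∧ y ∈ Yprime α β := by
  rcases vertex_cases u with ⟨w, rfl⟩ | ⟨y, rfl⟩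
  · exact absurd (reach_iota0 α β w) h
  · exact ⟨y, rfl, mem_Yprime_iff.mpr h⟩

lemma stepY_step {y y' : Y} (h : stepY α β y y') :
    step α β (yv y : X ⊕ Y ⊕ Z) (yv y') := by
  rcases h with h | h
  · exact Or.inl ⟨(Sum.inr y, Sum.inr y'), h, rfl, rfl⟩
  · exact Or.inr ⟨(Sum.inl y, Sum.inl y'), h, rfl, rfl⟩

lemma step_yv {y y' : Y} (h : step α β (yv y : X ⊕ Y ⊕ Z) (yv y')) : stepY α β y y' := by
  rcases h with ⟨⟨p1, p2⟩, hp, h1, h2⟩ | ⟨⟨p1, p2⟩, hp, h1, h2⟩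
  · rcases p1 with x | a <;> rcases p2 with x' | b <;> simp_all [ι₁]
    exact Or.inl hp
  · rcases p1 with a | z <;> rcases p2 with b | z' <;> simp_all [ι₂]
    exact Or.inr hp

lemma rtg_step_to_stepY' {u v : X ⊕ Y ⊕ Z} (h : Relation.ReflTransGen (step α β) u v) :
    ∀ (_ : ¬ ReachR α β u) (y : Y), u = yv y →
      ∃ y' : Y, v = yv y' ∧ Relation.ReflTransGen (stepY α β) y y' := by
  induction h using Relation.ReflTransGen.head_induction_on with
  | refl => exact fun _ y hy => ⟨y, hy, Relation.ReflTransGen.refl⟩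
  | head h' hrest ih =>
    rintro hu y rfl
    have hc : ¬ ReachR α β _ := fun hr => hu (reach_head h' hr)
    obtain ⟨yc, rfl, -⟩ := not_reach_cases hc
    obtain ⟨y', hv, hrtg⟩ := ih hc yc rfl
    exact ⟨y', hv, Relation.ReflTransGen.head (step_yv h') hrtg⟩

lemma rtg_step_to_stepY {y : Y} {v : X ⊕ Y ⊕ Z} (hy : ¬ ReachR α β (yv y : X ⊕ Y ⊕ Z))
    (h : Relation.ReflTransGen (step α β) (yv y) v) :
    ∃ y' : Y, v = yv y' ∧ Relation.ReflTransGen (stepY α β) y y' :=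
  rtg_step_to_stepY' h hy y rfl

lemma simRel_iff_rtg {y y' : Y} :
    simRel α β y y' ↔ Relation.ReflTransGen (stepY α β) y y' :=
  finChain_iff_rtg (stepY α β) y y'

end Aux

section Alt

variable {X Y Z : Type} {α : PBR X Y} {β : PBR Y Z}

/-- An alternating connected sequence from `u` to `v` (arbitrary endpoints). -/
def AltSeq (α : PBR X Y) (β : PBR Y Z) (L : List (Bool × (X ⊕ Y ⊕ Z) × (X ⊕ Y ⊕ Z)))
    (u v : X ⊕ Y ⊕ Z) : Prop :=
  IsConnSeq α β L ∧ L.head?.map (fun e => e.2.1) = some u ∧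
    L.getLast?.map (fun e => e.2.2) = some v

lemma connectsVia_iff {L : List (Bool × (X ⊕ Y ⊕ Z) × (X ⊕ Y ⊕ Z))} {a b : X ⊕ Z} :
    ConnectsVia α β L a b ↔ AltSeq α β L (ι₀ a) (ι₀ b) := Iff.rfl

lemma edge_step {e : Bool × (X ⊕ Y ⊕ Z) × (X ⊕ Y ⊕ Z)} (he : EdgeMem α β e) :
    step α β e.2.1 e.2.2 := by
  rcases e with ⟨lab, u, v⟩
  cases lab
  · exact Or.inl (by simpa [EdgeMem] using he)
  · exact Or.inr (by simpa [EdgeMem] using he)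

lemma step_to_edge {u v : X ⊕ Y ⊕ Z} (h : step α β u v) :
    ∃ e, EdgeMem α β e ∧ e.2.1 = u ∧ e.2.2 = v := by
  rcases h with h | h
  · exact ⟨(false, u, v), by simpa [EdgeMem] using h, rfl, rfl⟩
  · exact ⟨(true, u, v), by simpa [EdgeMem] using h, rfl, rfl⟩

lemma altSeq_single {e : Bool × (X ⊕ Y ⊕ Z) × (X ⊕ Y ⊕ Z)} (he : EdgeMem α β e) :
    AltSeq α β [e] e.2.1 e.2.2 :=
  ⟨⟨by simp, by simpa using he, List.isChain_singleton _⟩, by simp, by simp⟩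

lemma altSeq_head_eq {f : Bool × (X ⊕ Y ⊕ Z) × (X ⊕ Y ⊕ Z)} {M u v}
    (h : AltSeq α β (f :: M) u v) : f.2.1 = u := by
  simpa using h.2.1

lemma altSeq_cons {e f : Bool × (X ⊕ Y ⊕ Z) × (X ⊕ Y ⊕ Z)} {M u v}
    (he : EdgeMem α β e) (h : AltSeq α β (f :: M) u v)
    (hlab : e.1 ≠ f.1) (hvert : e.2.2 = u) : AltSeq α β (e :: f :: M) e.2.1 v := by
  obtain ⟨⟨-, hmem, hch⟩, hhead, hlast⟩ := h
  have hu : f.2.1 = u := by simpa using hhead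
  refine ⟨⟨by simp, ?_, ?_⟩, by simp, ?_⟩
  · intro x hx
    rcases List.mem_cons.mp hx with rfl | hx
    · exact he
    · exact hmem x hx
  · exact List.isChain_cons_cons.mpr ⟨⟨hlab, hvert.trans hu.symm⟩, hch⟩
  · rw [List.getLast?_cons_cons]; exact hlast

lemma altSeq_tail {f g : Bool × (X ⊕ Y ⊕ Z) × (X ⊕ Y ⊕ Z)} {N u v}
    (h : AltSeq α β (f :: g :: N) u v) : AltSeq α β (g :: N) f.2.2 v := by
  obtain ⟨⟨-, hmem, hch⟩, hhead, hlast⟩ := h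
  obtain ⟨⟨-, hfg⟩, hch'⟩ := List.isChain_cons_cons.mp hch
  refine ⟨⟨by simp, fun x hx => hmem x (List.mem_cons_of_mem _ hx), hch'⟩, ?_, ?_⟩
  · simp [hfg]
  · rw [List.getLast?_cons_cons] at hlast; exact hlast

lemma altSeq_walk {L u v} (h : AltSeq α β L u v) :
    Relation.ReflTransGen (step α β) u v := by
  induction L generalizing u with
  | nil => exact absurd rfl h.1.1
  | cons f M ih =>
    have hf1 : f.2.1 = u := altSeq_head_eq h
    have hstep : step α β f.2.1 f.2.2 := edge_step (h.1.2.1 f (by simp))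
    cases M with
    | nil =>
      have hv : f.2.2 = v := by simpa using h.2.2
      exact hf1 ▸ hv ▸ Relation.ReflTransGen.single hstep
    | cons g N =>
      exact Relation.ReflTransGen.head (hf1 ▸ hstep) (ih (altSeq_tail h))

lemma altSeq_mem {e : Bool × (X ⊕ Y ⊕ Z) × (X ⊕ Y ⊕ Z)} {L u v}
    (hm : e ∈ L) (h : AltSeq α β L u v) :
    Relation.ReflTransGen (step α β) e.2.1 v := by
  induction L generalizing u with
  | nil => exact absurd rfl h.1.1
  | cons f M ih =>
    rcases List.mem_cons.mp hm with rfl | hm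
    · exact (altSeq_head_eq h) ▸ altSeq_walk h
    · cases M with
      | nil => exact absurd hm List.not_mem_nil
      | cons g N => exact ih hm (altSeq_tail h)

lemma altSeq_append {P Q : List (Bool × (X ⊕ Y ⊕ Z) × (X ⊕ Y ⊕ Z))} {u v w}
    (hP : AltSeq α β P u v) (hQ : AltSeq α β Q v w)
    (hlab : ∀ p q, P.getLast? = some p → Q.head? = some q → p.1 ≠ q.1) :
    AltSeq α β (P ++ Q) u w := by
  obtain ⟨⟨hPne, hPmem, hPch⟩, hPh, hPl⟩ := hP
  obtain ⟨⟨hQne, hQmem, hQch⟩, hQh, hQl⟩ := hQ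
  refine ⟨⟨by simp [hPne], ?_, ?_⟩, ?_, ?_⟩
  · intro x hx
    rcases List.mem_append.mp hx with h | h
    exacts [hPmem x h, hQmem x h]
  · unfold List.Chain'; rw [List.isChain_append]
    refine ⟨hPch, hQch, fun p hp q hq => ⟨hlab p q hp hq, ?_⟩⟩
    have h1 : p.2.2 = v := by rw [hp] at hPl; simpa using hPl
    have h2 : q.2.1 = v := by rw [hq] at hQh; simpa using hQh
    exact h1.trans h2.symm
  · obtain ⟨p0, P', rfl⟩ := List.exists_cons_of_ne_nil hPne
    simpa using hPh
  · rw [List.getLast?_append_of_ne_nil P hQne]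
    exact hQl

section WithEquiv
variable (hα : Equivalence fun a b : X ⊕ Y => (a, b) ∈ α)
    (hβ : Equivalence fun a b : Y ⊕ Z => (a, b) ∈ β)
include hα hβ

lemma edge_trans {e f : Bool × (X ⊕ Y ⊕ Z) × (X ⊕ Y ⊕ Z)}
    (he : EdgeMem α β e) (hf : EdgeMem α β f) (hlab : e.1 = f.1) (hv : e.2.2 = f.2.1) :
    EdgeMem α β (e.1, e.2.1, f.2.2) := by
  rcases e with ⟨lab, u, v⟩; rcases f with ⟨lab', v', w⟩
  subst hlab
  simp only at hv
  cases lab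
  · simp only [EdgeMem, Bool.false_eq_true, if_false] at he hf ⊢
    obtain ⟨p, hp, hp1, hp2⟩ := he
    obtain ⟨q, hq, hq1, hq2⟩ := hf
    have hpq : p.2 = q.1 := iota1_inj (by rw [hp2, hq1, ← hv])
    exact ⟨(p.1, q.2), hα.trans (show (p.1, p.2) ∈ α from hp) (hpq ▸ hq), hp1, hq2⟩
  · simp only [EdgeMem, if_true] at he hf ⊢
    obtain ⟨p, hp, hp1, hp2⟩ := he
    obtain ⟨q, hq, hq1, hq2⟩ := hf
    have hpq : p.2 = q.1 := iota2_inj (by rw [hp2, hq1, ← hv])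
    exact ⟨(p.1, q.2), hβ.trans (show (p.1, p.2) ∈ β from hp) (hpq ▸ hq), hp1, hq2⟩

lemma edge_symm {e : Bool × (X ⊕ Y ⊕ Z) × (X ⊕ Y ⊕ Z)} (he : EdgeMem α β e) :
    EdgeMem α β (e.1, e.2.2, e.2.1) := by
  rcases e with ⟨lab, u, v⟩
  cases lab
  · simp only [EdgeMem, Bool.false_eq_true, if_false] at he ⊢
    obtain ⟨p, hp, hp1, hp2⟩ := he
    exact ⟨(p.2, p.1), hα.symm hp, hp2, hp1⟩
  · simp only [EdgeMem, if_true] at he ⊢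
    obtain ⟨p, hp, hp1, hp2⟩ := he
    exact ⟨(p.2, p.1), hβ.symm hp, hp2, hp1⟩

lemma edge_mem_trivY (lab : Bool) (y : Y) :
    EdgeMem α β (lab, (yv y : X ⊕ Y ⊕ Z), yv y) := by
  cases lab <;> simp only [EdgeMem, if_true, Bool.false_eq_true, if_false]
  · exact ⟨(Sum.inr y, Sum.inr y), hα.refl _, rfl, rfl⟩
  · exact ⟨(Sum.inl y, Sum.inl y), hβ.refl _, rfl, rfl⟩

lemma edge_mem_trivIota0 (w : X ⊕ Z) :
    ∃ lab, EdgeMem α β (lab, ι₀ w, ι₀ w) := by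
  rcases w with x | z
  · refine ⟨false, ?_⟩
    simp only [EdgeMem, Bool.false_eq_true, if_false]
    exact ⟨(Sum.inl x, Sum.inl x), hα.refl _, rfl, rfl⟩
  · refine ⟨true, ?_⟩
    simp only [EdgeMem, if_true]
    exact ⟨(Sum.inr z, Sum.inr z), hβ.refl _, rfl, rfl⟩

omit hα hβ in
lemma altSeq_replace_head {f g : Bool × (X ⊕ Y ⊕ Z) × (X ⊕ Y ⊕ Z)} {M u v}
    (h : AltSeq α β (f :: M) u v) (hg : EdgeMem α β g)
    (hlab : g.1 = f.1) (hv2 : g.2.2 = f.2.2) : AltSeq α β (g :: M) g.2.1 v := by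
  obtain ⟨⟨-, hmem, hch⟩, hhead, hlast⟩ := h
  obtain ⟨hrel, hch'⟩ := List.isChain_cons.mp hch
  refine ⟨⟨by simp, ?_, ?_⟩, by simp, ?_⟩
  · intro x hx
    rcases List.mem_cons.mp hx with rfl | hx
    · exact hg
    · exact hmem x (List.mem_cons_of_mem _ hx)
  · refine List.isChain_cons.mpr ⟨?_, hch'⟩
    intro b hb
    obtain ⟨h1, h2⟩ := hrel b hb
    exact ⟨hlab ▸ h1, hv2 ▸ h2⟩
  · cases M with
    | nil => simpa [hv2] using hlast
    | cons g' N => rw [List.getLast?_cons_cons]; rw [List.getLast?_cons_cons] at hlast; exact hlast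

lemma altSeq_extend {u v w : X ⊕ Y ⊕ Z} {L} (h : step α β u v) (hL : AltSeq α β L v w) :
    ∃ L', AltSeq α β L' u w := by
  obtain ⟨e, he, he1, he2⟩ := step_to_edge h
  subst he1
  subst he2
  obtain ⟨f, M, rfl⟩ := List.exists_cons_of_ne_nil hL.1.1
  have hf1 : f.2.1 = e.2.2 := altSeq_head_eq hL
  by_cases hc : e.1 = f.1
  · have hg : EdgeMem α β (e.1, e.2.1, f.2.2) :=
      edge_trans hα hβ he (hL.1.2.1 f (by simp)) hc hf1.symm
    exact ⟨(e.1, e.2.1, f.2.2) :: M, altSeq_replace_head hL hg hc rfl⟩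
  · exact ⟨e :: f :: M, altSeq_cons he hL hc rfl⟩

lemma rtg_to_altSeq {u v : X ⊕ Y ⊕ Z} (h : Relation.ReflTransGen (step α β) u v) :
    u = v ∨ ∃ L, AltSeq α β L u v := by
  induction h using Relation.ReflTransGen.head_induction_on with
  | refl => exact Or.inl rfl
  | head h' hrest ih =>
    rcases ih with rfl | ⟨L, hL⟩
    · obtain ⟨e, he, he1, he2⟩ := step_to_edge h'
      exact Or.inr ⟨[e], he1 ▸ he2 ▸ altSeq_single he⟩
    · exact Or.inr (altSeq_extend hα hβ h' hL)

lemma reach_padded {y : Y} (h : ReachR α β (yv y : X ⊕ Y ⊕ Z)) (lab : Bool) :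
    ∃ L b, AltSeq α β L (yv y) (ι₀ b) ∧ L.head?.map (fun e => e.1) = some lab := by
  obtain ⟨b, hb⟩ := h
  rcases rtg_to_altSeq hα hβ hb with h' | ⟨L, hL⟩
  · exact absurd h' (yv_ne_iota0 y b)
  · obtain ⟨f, M, rfl⟩ := List.exists_cons_of_ne_nil hL.1.1
    by_cases hc : f.1 = lab
    · exact ⟨f :: M, b, hL, by simp [hc]⟩
    · have ht : EdgeMem α β ((lab, (yv y : X ⊕ Y ⊕ Z), yv y)) := edge_mem_trivY hα hβ lab y
      refine ⟨(lab, (yv y : X ⊕ Y ⊕ Z), yv y) :: f :: M, b, ?_, by simp⟩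
      exact altSeq_cons ht hL (fun hh => hc hh.symm) rfl

end WithEquiv

end Alt

section Alt2

variable {X Y Z : Type} {α : PBR X Y} {β : PBR Y Z}

lemma altSeq_cons' {e : Bool × (X ⊕ Y ⊕ Z) × (X ⊕ Y ⊕ Z)} {L u v} {lab : Bool}
    (he : EdgeMem α β e) (h : AltSeq α β L u v)
    (hhl : L.head?.map (fun x => x.1) = some lab)
    (hlab : e.1 ≠ lab) (hvert : e.2.2 = u) : AltSeq α β (e :: L) e.2.1 v := by
  obtain ⟨f, M, rfl⟩ := List.exists_cons_of_ne_nil h.1.1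
  have : f.1 = lab := by simpa using hhl
  exact altSeq_cons he h (this ▸ hlab) hvert

section WithEquiv2
variable (hα : Equivalence fun a b : X ⊕ Y => (a, b) ∈ α)
    (hβ : Equivalence fun a b : Y ⊕ Z => (a, b) ∈ β)
include hα hβ

lemma altSeq_reverse {L u v} (h : AltSeq α β L u v) :
    AltSeq α β ((L.map (fun e => (e.1, e.2.2, e.2.1))).reverse) v u := by
  obtain ⟨⟨hne, hmem, hch⟩, hh, hl⟩ := h
  refine ⟨⟨by simp [hne], ?_, ?_⟩, ?_, ?_⟩
  · intro x hx
    simp only [List.mem_reverse, List.mem_map] at hx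
    obtain ⟨a, ha, rfl⟩ := hx
    exact edge_symm hα hβ (hmem a ha)
  · unfold List.Chain'; rw [List.isChain_reverse, List.isChain_map]
    refine hch.imp ?_
    rintro a b ⟨h1, h2⟩
    exact ⟨Ne.symm h1, h2.symm⟩
  · simp only [List.head?_reverse, List.getLast?_map, Option.map_map]
    simpa using hl
  · simp only [List.getLast?_reverse, List.head?_map, Option.map_map]
    simpa using hh

lemma isFrothy_iff {e : Bool × (X ⊕ Y ⊕ Z) × (X ⊕ Y ⊕ Z)} :
    IsFrothy α β e ↔ EdgeMem α β e ∧ ¬ ReachR α β e.2.1 := by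
  constructor
  · rintro ⟨hmem, hno⟩
    refine ⟨hmem, fun hr => ?_⟩
    have hstep : step α β e.2.1 e.2.2 := edge_step hmem
    have hrv : ReachR α β e.2.2 := by
      obtain ⟨w, hw⟩ := hr
      exact ⟨w, Relation.ReflTransGen.head (step_symm hα hβ hstep) hw⟩
    -- build the suffix Q, an AltSeq from e.2.1 to some ι₀ b with head edge e
    have hQ : ∃ Q b, AltSeq α β Q e.2.1 (ι₀ b) ∧ e ∈ Q ∧
        Q.head? = some e := by
      rcases vertex_cases e.2.2 with ⟨b, hb⟩ | ⟨y', hy'⟩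
      · refine ⟨[e], b, ?_, by simp, by simp⟩
        have := altSeq_single hmem
        rwa [hb] at this
      · obtain ⟨S, b, hS, hSlab⟩ := reach_padded hα hβ (hy' ▸ hrv) (!e.1)
        refine ⟨e :: S, b, ?_, by simp, by simp⟩
        exact altSeq_cons' hmem hS hSlab (Bool.not_ne_self e.1).symm hy'
    obtain ⟨Q, b, hQ, heQ, hQh⟩ := hQ
    rcases vertex_cases e.2.1 with ⟨a, ha⟩ | ⟨y, hy⟩
    · exact hno Q a b (connectsVia_iff.mpr (ha ▸ hQ)) heQ
    · obtain ⟨P₀, a, hP₀, hP₀lab⟩ := reach_padded hα hβ (hy ▸ hr) (!e.1)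
      set P := (P₀.map (fun x => (x.1, x.2.2, x.2.1))).reverse with hP
      have hPrev : AltSeq α β P (ι₀ a) (yv y) := altSeq_reverse hα hβ hP₀
      have hPlab : P.getLast?.map (fun x => x.1) = some (!e.1) := by
        rw [hP]
        simp only [List.getLast?_reverse, List.head?_map, Option.map_map]
        simpa using hP₀lab
      have happ : AltSeq α β (P ++ Q) (ι₀ a) (ι₀ b) := by
        refine altSeq_append (hy ▸ hPrev) hQ ?_
        intro p q hp hq2
        have hp1 : p.1 = !e.1 := by rw [hp] at hPlab; simpa using hPlab
        have hqe : q = e := by rw [hq2] at hQh; exact Option.some_injective _ hQh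
        rw [hp1, hqe]
        exact Bool.not_ne_self e.1
      exact hno (P ++ Q) a b (connectsVia_iff.mpr happ) (by simp [heQ])
  · rintro ⟨hmem, hnr⟩
    refine ⟨hmem, fun L a b hC hmemL => hnr ?_⟩
    exact ⟨b, altSeq_mem hmemL (connectsVia_iff.mp hC)⟩

end WithEquiv2

end Alt2

section Cycles

variable {X Y Z : Type} {α : PBR X Y} {β : PBR Y Z}

/-- The trivial frothy cycle at `y`. -/
def Tcyc (y : Y) : List (Bool × (X ⊕ Y ⊕ Z) × (X ⊕ Y ⊕ Z)) :=
  [(false, yv y, yv y), (true, yv y, yv y)]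

/-- The square cycle joining `y` and `y'` through an edge of label `lab`. -/
def Scyc (lab : Bool) (y y' : Y) : List (Bool × (X ⊕ Y ⊕ Z) × (X ⊕ Y ⊕ Z)) :=
  [(lab, yv y, yv y'), (!lab, yv y', yv y'), (lab, yv y', yv y), (!lab, yv y, yv y)]

lemma mem_Tcyc (lab : Bool) (y : Y) : (lab, (yv y : X ⊕ Y ⊕ Z), yv y) ∈ Tcyc y := by
  cases lab <;> simp [Tcyc]

lemma frothyCycle_altSeq {L} (h : IsFrothyCycle α β L) :
    ∃ u, AltSeq α β L u u ∧ L.head?.map (fun e => e.2.1) = some u := by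
  obtain ⟨f, M, rfl⟩ := List.exists_cons_of_ne_nil h.1.1
  exact ⟨f.2.1, ⟨h.1, by simp, by rw [h.2.2.1]; simp⟩, by simp⟩

section WithEquiv3
variable (hα : Equivalence fun a b : X ⊕ Y => (a, b) ∈ α)
    (hβ : Equivalence fun a b : Y ⊕ Z => (a, b) ∈ β)
include hα hβ

lemma frothy_not_reach {e : Bool × (X ⊕ Y ⊕ Z) × (X ⊕ Y ⊕ Z)} (h : IsFrothy α β e) :
    ¬ ReachR α β e.2.1 := ((isFrothy_iff hα hβ).mp h).2

lemma frothy_not_reach' {e : Bool × (X ⊕ Y ⊕ Z) × (X ⊕ Y ⊕ Z)} (h : IsFrothy α β e) :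
    ¬ ReachR α β e.2.2 := by
  intro hr
  exact frothy_not_reach hα hβ h (reach_head (edge_step h.1) hr)

lemma frothyCycle_headY {L} (h : IsFrothyCycle α β L) :
    ∃ y₀, y₀ ∈ Yprime α β ∧ L.head?.map (fun e => e.2.1) = some ((yv y₀ : X ⊕ Y ⊕ Z)) := by
  obtain ⟨f, M, rfl⟩ := List.exists_cons_of_ne_nil h.1.1
  have hf : IsFrothy α β f := h.2.2.2.2 f (by simp)
  obtain ⟨y₀, hy, hmem⟩ := not_reach_cases (frothy_not_reach hα hβ hf)
  exact ⟨y₀, hmem, by simp [← hy]⟩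

lemma frothyCycle_mem_simRel {L} (h : IsFrothyCycle α β L) {y₀ : Y}
    (hy₀ : L.head?.map (fun e => e.2.1) = some ((yv y₀ : X ⊕ Y ⊕ Z)))
    {e : Bool × (X ⊕ Y ⊕ Z) × (X ⊕ Y ⊕ Z)} (he : e ∈ L) :
    ∃ ye, e.2.1 = (yv ye : X ⊕ Y ⊕ Z) ∧ Relation.ReflTransGen (stepY α β) ye y₀ := by
  obtain ⟨u, hAlt, hh⟩ := frothyCycle_altSeq h
  have hu : u = yv y₀ := by rw [hh] at hy₀; exact Option.some_injective _ hy₀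
  subst hu
  have hw : Relation.ReflTransGen (step α β) e.2.1 (yv y₀) := altSeq_mem he hAlt
  have hnr : ¬ ReachR α β e.2.1 := frothy_not_reach hα hβ (h.2.2.2.2 e he)
  obtain ⟨ye, hye, _⟩ := not_reach_cases hnr
  obtain ⟨y', hv, hrtg⟩ := rtg_step_to_stepY' hw hnr ye hye
  have : y' = y₀ := by simpa [yv] using hv.symm
  exact ⟨ye, hye, this ▸ hrtg⟩

lemma Tcyc_frothy {y : Y} (hy : y ∈ Yprime α β) : IsFrothyCycle α β (Tcyc y : List _) := by
  have hnr : ¬ ReachR α β (yv y : X ⊕ Y ⊕ Z) := mem_Yprime_iff.mp hy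
  refine ⟨⟨by simp [Tcyc], ?_, ?_⟩, by simp [Tcyc], by simp [Tcyc], by simp [Tcyc], ?_⟩
  · intro e hee
    simp only [Tcyc, List.mem_cons, List.mem_singleton, List.not_mem_nil, or_false] at hee
    rcases hee with rfl | rfl
    · exact edge_mem_trivY hα hβ false y
    · exact edge_mem_trivY hα hβ true y
  · refine List.isChain_cons_cons.mpr ⟨⟨by simp, rfl⟩, List.isChain_singleton _⟩
  · intro e hee
    simp only [Tcyc, List.mem_cons, List.mem_singleton, List.not_mem_nil, or_false] at hee
    rcases hee with rfl | rfl
    · exact (isFrothy_iff hα hβ).mpr ⟨edge_mem_trivY hα hβ false y, hnr⟩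
    · exact (isFrothy_iff hα hβ).mpr ⟨edge_mem_trivY hα hβ true y, hnr⟩

lemma Scyc_frothy {lab : Bool} {y y' : Y} (hy : y ∈ Yprime α β) (hy' : y' ∈ Yprime α β)
    (hmem : EdgeMem α β (lab, (yv y : X ⊕ Y ⊕ Z), yv y')) :
    IsFrothyCycle α β (Scyc lab y y' : List _) := by
  have hnr : ¬ ReachR α β (yv y : X ⊕ Y ⊕ Z) := mem_Yprime_iff.mp hy
  have hnr' : ¬ ReachR α β (yv y' : X ⊕ Y ⊕ Z) := mem_Yprime_iff.mp hy'
  have hmem' : EdgeMem α β (lab, (yv y' : X ⊕ Y ⊕ Z), yv y) := edge_symm hα hβ hmem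
  have hmems : ∀ e ∈ (Scyc lab y y' : List _), EdgeMem α β e := by
    intro e hee
    simp only [Scyc, List.mem_cons, List.mem_singleton, List.not_mem_nil, or_false] at hee
    rcases hee with rfl | rfl | rfl | rfl
    · exact hmem
    · exact edge_mem_trivY hα hβ _ _
    · exact hmem'
    · exact edge_mem_trivY hα hβ _ _
  refine ⟨⟨by simp [Scyc], hmems, ?_⟩, by simp [Scyc], by simp [Scyc], ?_, ?_⟩
  · refine List.isChain_cons_cons.mpr ⟨⟨(Bool.not_ne_self lab).symm, rfl⟩,
      List.isChain_cons_cons.mpr ⟨⟨Bool.not_ne_self lab, rfl⟩,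
        List.isChain_cons_cons.mpr ⟨⟨(Bool.not_ne_self lab).symm, rfl⟩, List.isChain_singleton _⟩⟩⟩
  · simp only [Scyc, List.head?_cons, List.getLast?]
    simp [Bool.not_ne_self]
  · intro e hee
    simp only [Scyc, List.mem_cons, List.mem_singleton, List.not_mem_nil, or_false] at hee
    rcases hee with rfl | rfl | rfl | rfl
    · exact (isFrothy_iff hα hβ).mpr ⟨hmem, hnr⟩
    · exact (isFrothy_iff hα hβ).mpr ⟨edge_mem_trivY hα hβ _ _, hnr'⟩
    · exact (isFrothy_iff hα hβ).mpr ⟨hmem', hnr'⟩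
    · exact (isFrothy_iff hα hβ).mpr ⟨edge_mem_trivY hα hβ _ _, hnr⟩

end WithEquiv3

end Cycles

section QuotLemmas

variable {X Y Z : Type} {α : PBR X Y} {β : PBR Y Z}
variable (hα : Equivalence fun a b : X ⊕ Y => (a, b) ∈ α)
    (hβ : Equivalence fun a b : Y ⊕ Z => (a, b) ∈ β)
include hα hβ

lemma yprime_step {y y' : Y} (hy : y ∈ Yprime α β) (h : stepY α β y y') :
    y' ∈ Yprime α β := by
  rw [mem_Yprime_iff] at hy ⊢
  exact fun hr => hy (reach_head (stepY_step h) hr)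

lemma stepY_edge {y y' : Y} (h : stepY α β y y') :
    ∃ lab, EdgeMem α β (lab, (yv y : X ⊕ Y ⊕ Z), yv y') := by
  rcases h with h | h
  · refine ⟨false, ?_⟩
    simp only [EdgeMem, Bool.false_eq_true, if_false]
    exact ⟨(Sum.inr y, Sum.inr y'), h, rfl, rfl⟩
  · refine ⟨true, ?_⟩
    simp only [EdgeMem, if_true]
    exact ⟨(Sum.inl y, Sum.inl y'), h, rfl, rfl⟩

lemma quot_tcyc_step {y y' : Y} (hy : y ∈ Yprime α β) (h : stepY α β y y') :
    Quot.mk (fun L L' : FrothyCycles α β => ∃ e, e ∈ L.1 ∧ e ∈ L'.1)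
        ⟨Tcyc y, Tcyc_frothy hα hβ hy⟩ =
      Quot.mk (fun L L' : FrothyCycles α β => ∃ e, e ∈ L.1 ∧ e ∈ L'.1)
        ⟨Tcyc y', Tcyc_frothy hα hβ (yprime_step hα hβ hy h)⟩ := by
  have hy' := yprime_step hα hβ hy h
  obtain ⟨lab, hmem⟩ := stepY_edge hα hβ h
  have hS := Scyc_frothy hα hβ hy hy' hmem
  calc Quot.mk _ (⟨Tcyc y, Tcyc_frothy hα hβ hy⟩ : FrothyCycles α β)
      = Quot.mk _ (⟨Scyc lab y y', hS⟩ : FrothyCycles α β) :=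
        Quot.sound ⟨(!lab, yv y, yv y), mem_Tcyc _ y, by simp [Scyc]⟩
    _ = _ := Quot.sound ⟨(!lab, yv y', yv y'), by simp [Scyc], mem_Tcyc _ y'⟩

lemma quot_tcyc_rtg {y y' : Y} (h : Relation.ReflTransGen (stepY α β) y y')
    (hy : y ∈ Yprime α β) :
    ∃ hy' : y' ∈ Yprime α β,
      Quot.mk (fun L L' : FrothyCycles α β => ∃ e, e ∈ L.1 ∧ e ∈ L'.1)
          ⟨Tcyc y, Tcyc_frothy hα hβ hy⟩ =
        Quot.mk (fun L L' : FrothyCycles α β => ∃ e, e ∈ L.1 ∧ e ∈ L'.1)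
          ⟨Tcyc y', Tcyc_frothy hα hβ hy'⟩ := by
  revert hy
  induction h using Relation.ReflTransGen.head_induction_on with
  | refl => exact fun hy => ⟨hy, rfl⟩
  | head h' hrest ih =>
    intro hy
    have hc := yprime_step hα hβ hy h'
    obtain ⟨hy', heq⟩ := ih hc
    exact ⟨hy', (quot_tcyc_step hα hβ hy h').trans heq⟩

end QuotLemmas

/-- For equivalence relations `α` on `X ⊕ Y` and `β` on `Y ⊕ Z` regarded as
PBRs, `∼` is an equivalence relation on `Y'` and `𝔭(α,β) = 𝔣((Ψ(α),Ψ(β)))`;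
consequently `Ψ̄ : (α,k) ↦ (Ψ(α),k)` respects the deformed compositions. -/
theorem p_eq_f_and_Psi_respects_deformation
    (X Y Z : Type) [Fintype X] [Fintype Y] [Fintype Z]
    (α : PBR X Y) (β : PBR Y Z)
    (hα : Equivalence fun a b : X ⊕ Y => (a, b) ∈ α)
    (hβ : Equivalence fun a b : Y ⊕ Z => (a, b) ∈ β) :
    Equivalence (fun y₁ y₂ : {y : Y // y ∈ Yprime α β} => simRel α β y₁.1 y₂.1) ∧
    pPart α β = fPBR α β ∧
    partComp β α = comp β α := by
  classical
  have hsym : Symmetric (stepY α β) := fun _ _ h => stepY_symm hα hβ h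
  have hsim_symm : ∀ {y1 y2 : Y}, simRel α β y1 y2 → simRel α β y2 y1 := fun h =>
    simRel_iff_rtg.mpr (haveI : Std.Symm (stepY α β) := ⟨hsym⟩; Std.Symm.symm _ _ (simRel_iff_rtg.mp h))
  have hsim_trans : ∀ {a b c : Y}, simRel α β a b → simRel α β b c → simRel α β a c :=
    fun h h' => simRel_iff_rtg.mpr ((simRel_iff_rtg.mp h).trans (simRel_iff_rtg.mp h'))
  refine ⟨⟨fun y => simRel_iff_rtg.mpr Relation.ReflTransGen.refl,
      fun h => hsim_symm h, fun h h' => hsim_trans h h'⟩, ?_, ?_⟩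
  · -- pPart = fPBR
    have hhead : ∀ L : FrothyCycles α β, ∃ y₀, y₀ ∈ Yprime α β ∧
        L.1.head?.map (fun e => e.2.1) = some ((yv y₀ : X ⊕ Y ⊕ Z)) :=
      fun L => frothyCycle_headY hα hβ L.2
    choose hY hmemY hheadY using hhead
    set R := fun L L' : FrothyCycles α β => ∃ e, e ∈ L.1 ∧ e ∈ L'.1 with hRdef
    set S := fun y₁ y₂ : {y : Y // y ∈ Yprime α β} => simRel α β y₁.1 y₂.1 with hSdef
    have Fresp : ∀ L L' : FrothyCycles α β, R L L' →
        Quot.mk S ⟨hY L, hmemY L⟩ = Quot.mk S ⟨hY L', hmemY L'⟩ := by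
      rintro L L' ⟨e, heL, heL'⟩
      obtain ⟨ye, hvy, hrtg⟩ := frothyCycle_mem_simRel hα hβ L.2 (hheadY L) heL
      obtain ⟨ye', hvy', hrtg'⟩ := frothyCycle_mem_simRel hα hβ L'.2 (hheadY L') heL'
      have hee : ye = ye' := by rw [hvy] at hvy'; simpa [yv] using hvy'
      apply Quot.sound
      show simRel α β (hY L) (hY L')
      exact simRel_iff_rtg.mpr
        ((haveI : Std.Symm (stepY α β) := ⟨fun _ _ h => stepY_symm hα hβ h⟩; Std.Symm.symm _ _ hrtg).trans
          (hee ▸ hrtg'))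
    have Gresp : ∀ y₁ y₂ : {y : Y // y ∈ Yprime α β}, S y₁ y₂ →
        Quot.mk R ⟨Tcyc y₁.1, Tcyc_frothy hα hβ y₁.2⟩ =
          Quot.mk R ⟨Tcyc y₂.1, Tcyc_frothy hα hβ y₂.2⟩ := by
      intro y₁ y₂ hs
      obtain ⟨hy₂', heq⟩ := quot_tcyc_rtg hα hβ (simRel_iff_rtg.mp hs) y₁.2
      exact heq
    let F : Quot R → Quot S := Quot.lift (fun L => Quot.mk S ⟨hY L, hmemY L⟩) Fresp
    let G : Quot S → Quot R :=
      Quot.lift (fun y => Quot.mk R ⟨Tcyc y.1, Tcyc_frothy hα hβ y.2⟩) Gresp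
    have hFG : ∀ q, F (G q) = q := by
      refine Quot.ind ?_
      intro y
      have h1 : F (G (Quot.mk S y)) = Quot.mk S ⟨hY ⟨Tcyc y.1, Tcyc_frothy hα hβ y.2⟩,
          hmemY ⟨Tcyc y.1, Tcyc_frothy hα hβ y.2⟩⟩ := by
        simp only [F, G]
      rw [h1]
      congr 1
      have := hheadY ⟨Tcyc y.1, Tcyc_frothy hα hβ y.2⟩
      have hyy : hY ⟨Tcyc y.1, Tcyc_frothy hα hβ y.2⟩ = y.1 := by
        simp only [Tcyc, List.head?_cons, Option.map_some] at this
        have h2 := Option.some_injective _ this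
        exact (Sum.inl_injective (Sum.inr_injective h2)).symm
      exact Subtype.ext hyy
    have hGF : ∀ q, G (F q) = q := by
      refine Quot.ind ?_
      intro L
      have h1 : G (F (Quot.mk R L)) =
          Quot.mk R ⟨Tcyc (hY L), Tcyc_frothy hα hβ (hmemY L)⟩ := by
        simp only [F, G]
      rw [h1]
      obtain ⟨f, M, hLfM⟩ := List.exists_cons_of_ne_nil L.2.1.1
      have hffro : IsFrothy α β f := L.2.2.2.2.2 f (by rw [hLfM]; simp)
      have hv0 : f.2.1 = (yv (hY L) : X ⊕ Y ⊕ Z) := by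
        have := hheadY L
        rw [hLfM] at this
        simpa using this
      obtain ⟨y₁, hv1, hy₁mem⟩ := not_reach_cases (frothy_not_reach' hα hβ hffro)
      have hf : f = (f.1, (yv (hY L) : X ⊕ Y ⊕ Z), (yv y₁ : X ⊕ Y ⊕ Z)) := by
        rw [← hv0, ← hv1]
      have hS4 := Scyc_frothy hα hβ (hmemY L) hy₁mem (hf ▸ hffro.1)
      calc Quot.mk R (⟨Tcyc (hY L), Tcyc_frothy hα hβ (hmemY L)⟩ : FrothyCycles α β)
          = Quot.mk R (⟨Scyc f.1 (hY L) y₁, hS4⟩ : FrothyCycles α β) :=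
            Quot.sound ⟨(!f.1, yv (hY L), yv (hY L)), mem_Tcyc _ _, by simp [Scyc]⟩
        _ = Quot.mk R L := by
            refine Quot.sound ⟨f, ?_, ?_⟩
            · simp only [Scyc, List.mem_cons]
              exact Or.inl hf
            · rw [hLfM]; simp
    exact Nat.card_congr (⟨G, F, hFG, hGF⟩ : Quot S ≃ Quot R)
  · -- partComp = comp
    ext p
    simp only [partComp, comp, Set.mem_setOf_eq]
    constructor
    · intro hp
      have hr : Relation.ReflTransGen (step α β) (ι₀ p.1) (ι₀ p.2) :=
        (finChain_iff_rtg _ _ _).mp hp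
      rcases rtg_to_altSeq hα hβ hr with heq | ⟨L, hL⟩
      · have hpp : p.1 = p.2 := iota0_inj heq
        obtain ⟨lab, he⟩ := edge_mem_trivIota0 hα hβ p.1
        refine ⟨[(lab, ι₀ p.1, ι₀ p.1)], ?_⟩
        rw [connectsVia_iff, ← hpp]
        exact altSeq_single he
      · exact ⟨L, connectsVia_iff.mpr hL⟩
    · rintro ⟨L, hC⟩
      exact (finChain_iff_rtg _ _ _).mpr (altSeq_walk (connectsVia_iff.mp hC))

end PBRPaper
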